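/- arXiv:0810.2488 — 3 statements merged into one kernel-verified Lean document; each statement's English description precedes it below -/
import Mathlib

section
/- For any integer r ≥ 1, the identity F_r(x^{-1}, y^{-1}) = H_r(y^{-1}) − 1 − y^{-r} F_r(x,y) holds, where F_r(x,y) = Σ_{k=1}^{r−1} ((x^k−1)/(x^r−1)) y^k and H_r(y) = Σ_{k=0}^{r−1} y^k. -/
set_option maxHeartbeats 1000000 in
/-- For `r ≥ 1`, with `H_r(y) = ∑_{k<r} y^k` and
`F_r(x,y) = ∑_{k=1}^{r-1} ((x^k - 1)/(x^r - 1)) y^k`, one has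
`F_r(x⁻¹, y⁻¹) = H_r(y⁻¹) - 1 - y^{-r} F_r(x,y)` for independent invertible
variables `x`, `y` (realized inside the iterated rational function field
`ℚ(x)(y)`). -/
theorem F_dual_identity (r : ℕ) (hr : 1 ≤ r) :
    let x : RatFunc (RatFunc ℚ) := RatFunc.C RatFunc.X
    let y : RatFunc (RatFunc ℚ) := RatFunc.X
    ∑ k ∈ Finset.Ico 1 r, ((x⁻¹) ^ k - 1) / ((x⁻¹) ^ r - 1) * (y⁻¹) ^ k
      = (∑ k ∈ Finset.range r, (y⁻¹) ^ k) - 1 -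
          (y⁻¹) ^ r * ∑ k ∈ Finset.Ico 1 r, (x ^ k - 1) / (x ^ r - 1) * y ^ k := by
  intro x y
  have hy : y ≠ 0 := RatFunc.X_ne_zero
  have hx : x ≠ 0 := by simp only [x, ne_eq, map_eq_zero]; exact RatFunc.X_ne_zero
  have hXr : (RatFunc.X : RatFunc ℚ) ^ r ≠ 1 := by
    intro h
    have hXpoly : ((Polynomial.X : Polynomial ℚ) ^ r) ≠ 1 := by
      intro h2
      have := congrArg Polynomial.natDegree h2
      simp [Polynomial.natDegree_X_pow] at this
      omega
    apply hXpoly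
    apply RatFunc.algebraMap_injective ℚ
    rw [map_pow, map_one, RatFunc.algebraMap_X]
    exact h
  have hxr : x ^ r - 1 ≠ 0 := by
    simp only [x, ← map_pow, ← map_one (RatFunc.C (K := RatFunc ℚ)), sub_ne_zero]
    exact fun h => hXr (RatFunc.C.injective h)
  have hxr' : (x⁻¹) ^ r - 1 ≠ 0 := by
    have : (x⁻¹) ^ r - 1 = -(x ^ r - 1) / x ^ r := by
      rw [eq_div_iff (pow_ne_zero _ hx), sub_mul, inv_pow, inv_mul_cancel₀ (pow_ne_zero _ hx)]; ring
    rw [this]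
    exact div_ne_zero (neg_ne_zero.mpr hxr) (pow_ne_zero _ hx)
  have hre : ∑ k ∈ Finset.Ico 1 r, (x ^ k - 1) / (x ^ r - 1) * y ^ k
      = ∑ k ∈ Finset.Ico 1 r, (x ^ (r - k) - 1) / (x ^ r - 1) * y ^ (r - k) := by
    refine Finset.sum_nbij' (fun k => r - k) (fun k => r - k) ?_ ?_ ?_ ?_ ?_ <;>
      intro a ha <;> simp only [Finset.mem_Ico] at ha ⊢
    · omega
    · omega
    · omega
    · omega
    · have h1 : r - (r - a) = a := by omega
      rw [h1]
  rw [hre]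
  have hrange : ∑ k ∈ Finset.range r, (y⁻¹) ^ k
      = 1 + ∑ k ∈ Finset.Ico 1 r, (y⁻¹) ^ k := by
    rw [Finset.range_eq_Ico, ← Finset.sum_Ico_consecutive _ (Nat.zero_le 1) hr]
    simp
  rw [hrange, Finset.mul_sum]
  rw [add_sub_cancel_left, ← Finset.sum_sub_distrib]
  apply Finset.sum_congr rfl
  intro k hk
  simp only [Finset.mem_Ico] at hk
  obtain ⟨hk1, hk2⟩ := hk
  obtain ⟨m, hm, hm1⟩ : ∃ m, r = k + m ∧ 1 ≤ m := ⟨r - k, by omega, by omega⟩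
  subst hm
  have hmk : k + m - k = m := by omega
  have hyk : (y⁻¹) ^ (k + m) * ((x ^ (k + m - k) - 1) / (x ^ (k + m) - 1) * y ^ (k + m - k))
      = (y⁻¹) ^ k * ((x ^ m - 1) / (x ^ (k + m) - 1)) := by
    rw [hmk, pow_add]
    field_simp
    rw [one_div, inv_pow, mul_comm, ← mul_assoc, mul_inv_cancel₀ (pow_ne_zero _ hy), one_mul]
  rw [hyk, ← mul_one_sub, mul_comm ((x⁻¹ ^ k - 1) / (x⁻¹ ^ (k + m) - 1))]
  congr 1
  rw [eq_sub_iff_add_eq, div_add_div _ _ hxr' hxr, div_eq_one_iff_eq (mul_ne_zero hxr' hxr)]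
  have hxk : x ^ k ≠ 0 := pow_ne_zero _ hx
  have hxm : x ^ m ≠ 0 := pow_ne_zero _ hx
  simp only [inv_pow, pow_add]
  field_simp
  ring
end

section
/- For integers r ≥ 2 and 0 ≤ k ≤ r−1, define ĨF_{r,k}(x_+,x_−) as the sum of the coefficients of y^k and y^{k−r} in F_r(x_+,y)·F_r(x_−,y^{-1}) − H_r(y)·Σ_{j=0}^{r−1} F_{r,j}(x_+)F_{r,j}(x_−) (and just the coefficient of y^0 when k = 0). Then ĨF_{r,k}(x_+,x_−) = ( (x_+^k−1)/(x_+^r−1) + (x_−^{r−k}−1)/(x_−^r−1) − 1 ) / (x_+x_− − 1) as rational functions. -/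
open Polynomial Finset

lemma coeff_AB {R : Type*} [CommRing R] (r : ℕ) (a b : ℕ → R) (m : ℕ) :
    ((∑ j ∈ Finset.range r, Polynomial.C (a j) * Polynomial.X ^ j) *
      (∑ j ∈ Finset.range r, Polynomial.C (b j) * Polynomial.X ^ (r - 1 - j))).coeff m
    = ∑ j1 ∈ Finset.range r, ∑ j2 ∈ Finset.range r,
        if j1 + (r - 1 - j2) = m then a j1 * b j2 else 0 := by
  rw [Finset.sum_mul_sum, Polynomial.finset_sum_coeff]
  refine Finset.sum_congr rfl fun j1 _ => ?_
  rw [Polynomial.finset_sum_coeff]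
  refine Finset.sum_congr rfl fun j2 _ => ?_
  rw [show (Polynomial.C (a j1) * Polynomial.X ^ j1) * (Polynomial.C (b j2) * Polynomial.X ^ (r-1-j2)) = Polynomial.C (a j1 * b j2) * Polynomial.X ^ (j1 + (r-1-j2)) by rw [Polynomial.C_mul, pow_add]; ring]
  simp [mul_assoc, Polynomial.coeff_C_mul, Polynomial.coeff_X_pow, eq_comm]

lemma coeff_SC {R : Type*} [CommRing R] (r : ℕ) (c : R) (m : ℕ) :
    ((∑ j ∈ Finset.range r, Polynomial.X ^ (j + r - 1)) * Polynomial.C c).coeff m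
    = ∑ j ∈ Finset.range r, if j + r - 1 = m then c else 0 := by
  rw [Finset.sum_mul, Polynomial.finset_sum_coeff]
  refine Finset.sum_congr rfl fun j _ => ?_
  rw [show (Polynomial.X ^ (j + r - 1) : R[X]) * Polynomial.C c = Polynomial.C c * Polynomial.X ^ (j+r-1) by ring]
  simp [mul_assoc, Polynomial.coeff_C_mul, Polynomial.coeff_X_pow, eq_comm]

lemma aux_sum {F : Type*} [Field F] (x z : F) (hx : x ≠ 1) (hz : z ≠ 1) (hxz : x*z ≠ 1) (n s t : ℕ) :
    ∑ j ∈ Finset.range n, (x^(j+s) - 1) * (z^(j+t) - 1)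
    = x^s*z^t * (((x*z)^n - 1)/(x*z-1)) - x^s * ((x^n-1)/(x-1)) - z^t*((z^n-1)/(z-1)) + n := by
  have h : ∀ j ∈ Finset.range n, (x^(j+s) - 1) * (z^(j+t) - 1)
      = x^s*z^t*(x*z)^j - x^s*x^j - z^t*z^j + 1 := by
    intro j _
    rw [pow_add, pow_add, mul_pow]; ring
  rw [Finset.sum_congr rfl h]
  simp only [Finset.sum_add_distrib, Finset.sum_sub_distrib, ← Finset.mul_sum,
    Finset.sum_const, Finset.card_range, nsmul_eq_mul, mul_one,
    geom_sum_eq hx, geom_sum_eq hz, geom_sum_eq hxz]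

lemma sum_ite_shift {M : Type*} [AddCommMonoid M] (r s : ℕ) (f : ℕ → M) :
    ∑ j ∈ Finset.range r, (if j + s ∈ Finset.range r then f j else 0)
      = ∑ j ∈ Finset.range (r - s), f j := by
  rw [← Finset.sum_subset (Finset.range_subset_range.2 (by omega : r - s ≤ r))
    (fun x hx hx' => by
      rw [Finset.mem_range] at *
      rw [if_neg (by simp only [Finset.mem_range]; omega)])]
  refine Finset.sum_congr rfl fun j hj => ?_
  rw [Finset.mem_range] at hj
  rw [if_pos (by simp only [Finset.mem_range]; omega)]

lemma ratX_pow_ne {F : Type*} [Field F] (r : ℕ) (hr : 1 ≤ r) :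
    (RatFunc.X : RatFunc F) ^ r - 1 ≠ 0 := by
  have h : (RatFunc.X : RatFunc F) ^ r - 1
      = algebraMap (Polynomial F) _ (Polynomial.X ^ r - Polynomial.C 1) := by
    simp [map_sub, map_pow, RatFunc.algebraMap_X]
  rw [h]
  exact RatFunc.algebraMap_ne_zero (Polynomial.X_pow_sub_C_ne_zero (by omega) 1)

lemma ratX_ne_one {F : Type*} [Field F] : (RatFunc.X : RatFunc F) ≠ 1 := by
  intro h
  exact ratX_pow_ne (F := F) 1 le_rfl (by rw [pow_one, h, sub_self])

lemma mix_ne {F : Type*} [Field F] (c : RatFunc F) (hc : c ≠ 0) :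
    RatFunc.C c * (RatFunc.X : RatFunc (RatFunc F)) - 1 ≠ 0 := by
  have h : RatFunc.C c * (RatFunc.X : RatFunc (RatFunc F)) - 1
      = algebraMap (Polynomial (RatFunc F)) _ (Polynomial.C c * Polynomial.X - 1) := by
    simp [RatFunc.algebraMap_X, RatFunc.algebraMap_C]
  rw [h]
  refine RatFunc.algebraMap_ne_zero (fun h0 => hc ?_)
  have := congrArg (fun p => Polynomial.coeff p 1) h0
  simpa [Polynomial.coeff_one] using this

lemma C_pow_ne {F : Type*} [Field F] (c : RatFunc F) (h : c ≠ 0) :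
    (RatFunc.C c : RatFunc (RatFunc F)) ≠ 0 := by
  exact (_root_.map_ne_zero (RatFunc.C)).2 h

lemma final_field_id {K : Type*} [Field K] (xp xm : K) (k n : ℕ)
    (hxpr : xp ^ k * xp ^ n - 1 ≠ 0) (hxmr : xm ^ k * xm ^ n - 1 ≠ 0)
    (hp1 : xp - 1 ≠ 0) (hm1 : xm - 1 ≠ 0) (hu : xp * xm - 1 ≠ 0) :
    (xp ^ k * 1 * ((xp ^ n * xm ^ n - 1) / (xp * xm - 1)) - xp ^ k * ((xp ^ n - 1) / (xp - 1)) - (xm ^ n - 1) / (xm - 1) +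
            (n : K)) /
          ((xp ^ k * xp ^ n - 1) * (xm ^ k * xm ^ n - 1)) -
        ((xp ^ k * xm ^ k * (xp ^ n * xm ^ n) - 1) / (xp * xm - 1) - (xp ^ k * xp ^ n - 1) / (xp - 1) -
              (xm ^ k * xm ^ n - 1) / (xm - 1) +
            ((k : K) + (n : K))) /
          ((xp ^ k * xp ^ n - 1) * (xm ^ k * xm ^ n - 1)) +
      (xm ^ n * ((xp ^ k * xm ^ k - 1) / (xp * xm - 1)) - (xp ^ k - 1) / (xp - 1) - xm ^ n * ((xm ^ k - 1) / (xm - 1)) +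
          (k : K)) /
        ((xp ^ k * xp ^ n - 1) * (xm ^ k * xm ^ n - 1)) =
    ((xp ^ k - 1) / (xp ^ k * xp ^ n - 1) + (xm ^ n - 1) / (xm ^ k * xm ^ n - 1) - 1) / (xp * xm - 1) := by
  have h2 : xm ^ n * xm ^ k - 1 ≠ 0 := by rwa [mul_comm]
  have h3 : xp ^ n * xp ^ k - 1 ≠ 0 := by rwa [mul_comm]
  field_simp
  ring

/-- For `r ≥ 2` and `0 ≤ k ≤ r - 1`, the combination `ĨF_{r,k}(x₊,x₋)` of
Laurent coefficients of
`F_r(x₊,y)·F_r(x₋,y⁻¹) - H_r(y)·∑_j F_{r,j}(x₊)F_{r,j}(x₋)` equals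
`((x₊^k - 1)/(x₊^r - 1) + (x₋^{r-k} - 1)/(x₋^r - 1) - 1)/(x₊x₋ - 1)`.
The Laurent polynomial in `y` is realized as the polynomial `P` obtained by
multiplying through by `y^{r-1}`, so the coefficient of `y^j` is
`P.coeff (j + r - 1)`; `ĨF_{r,k}` is the sum of the coefficients of `y^k` and
`y^{k-r}` (just the coefficient of `y^0` when `k = 0`).  The variables
`x₊, x₋` are independent, realized in the iterated rational function field. -/
theorem IIF_coeff_formula (r : ℕ) (hr : 2 ≤ r) (k : ℕ) (hk : k ≤ r - 1) :
    let K := RatFunc (RatFunc ℚ)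
    let xp : K := RatFunc.C RatFunc.X
    let xm : K := RatFunc.X
    let F : K → ℕ → K := fun x j => (x ^ j - 1) / (x ^ r - 1)
    let P : Polynomial K :=
      (∑ j ∈ Finset.range r, Polynomial.C (F xp j) * Polynomial.X ^ j) *
          (∑ j ∈ Finset.range r, Polynomial.C (F xm j) * Polynomial.X ^ (r - 1 - j)) -
        (∑ j ∈ Finset.range r, Polynomial.X ^ (j + r - 1)) *
          Polynomial.C (∑ j ∈ Finset.range r, F xp j * F xm j)
    (if k = 0 then P.coeff (r - 1) else P.coeff (k + r - 1) + P.coeff (k - 1))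
      = (F xp k + F xm (r - k) - 1) / (xp * xm - 1) := by
  intro K xp xm F P
  have hxpr : xp ^ r - 1 ≠ 0 := by
    have h : xp ^ r - 1 = RatFunc.C ((RatFunc.X : RatFunc ℚ) ^ r - 1) := by
      simp only [map_sub, map_pow, map_one]; rfl
    rw [h]
    exact C_pow_ne _ (ratX_pow_ne r (by omega))
  have hxmr : xm ^ r - 1 ≠ 0 := ratX_pow_ne r (by omega)
  have hxm1 : xm ≠ 1 := ratX_ne_one
  have hxp1 : xp ≠ 1 := by
    intro h
    apply ratX_ne_one (F := ℚ)
    have : RatFunc.C (RatFunc.X : RatFunc ℚ) = RatFunc.C 1 := by rw [map_one]; exact h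
    exact (RatFunc.C).injective this
  have hu : xp * xm - 1 ≠ 0 := mix_ne RatFunc.X RatFunc.X_ne_zero
  have hu1 : xp * xm ≠ 1 := fun h => hu (by rw [h, sub_self])
  have hSC : ∀ m, ((∑ j ∈ Finset.range r, Polynomial.X ^ (j + r - 1)) *
      Polynomial.C (∑ j ∈ Finset.range r, F xp j * F xm j) : Polynomial K).coeff m
      = ∑ j ∈ Finset.range r, if j + r - 1 = m then (∑ i ∈ Finset.range r, F xp i * F xm i) else 0 :=
    fun m => coeff_SC r _ m
  by_cases hk0 : k = 0
  · subst hk0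
    rw [if_pos rfl]
    have hAB : ((∑ j ∈ Finset.range r, Polynomial.C (F xp j) * Polynomial.X ^ j) *
        (∑ j ∈ Finset.range r, Polynomial.C (F xm j) * Polynomial.X ^ (r - 1 - j))).coeff (r-1)
        = ∑ j ∈ Finset.range r, F xp j * F xm j := by
      rw [coeff_AB]
      refine Finset.sum_congr rfl fun j1 hj1 => ?_
      rw [Finset.mem_range] at hj1
      rw [Finset.sum_congr rfl (fun j2 hj2 => if_congr
        (by rw [Finset.mem_range] at hj2; omega : (j1 + (r - 1 - j2) = r - 1) ↔ j2 = j1) rfl rfl),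
        Finset.sum_ite_eq' _ j1 (fun j2 => F xp j1 * F xm j2), if_pos (Finset.mem_range.2 hj1)]
    have hSC0 : ((∑ j ∈ Finset.range r, Polynomial.X ^ (j + r - 1)) *
        Polynomial.C (∑ j ∈ Finset.range r, F xp j * F xm j) : Polynomial K).coeff (r-1)
        = ∑ i ∈ Finset.range r, F xp i * F xm i := by
      rw [hSC, Finset.sum_congr rfl (fun j hj => if_congr
        (by rw [Finset.mem_range] at hj; omega : (j + r - 1 = r - 1) ↔ j = 0) rfl rfl),
        Finset.sum_ite_eq' _ 0 (fun _ => ∑ i ∈ Finset.range r, F xp i * F xm i),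
        if_pos (Finset.mem_range.2 (by omega))]
    show ((_ * _ - _ * _ : Polynomial K)).coeff _ = _
    rw [Polynomial.coeff_sub, hAB, hSC0, sub_self]
    have h1 : F xp 0 = 0 := by show ((xp ^ 0 - 1) / _ : K) = 0; rw [pow_zero, sub_self, zero_div]
    have h2 : F xm (r - 0) = 1 := by
      show ((xm ^ (r - 0) - 1) / (xm ^ r - 1) : K) = 1
      rw [Nat.sub_zero, div_self hxmr]
    rw [h1, h2, zero_add, sub_self, zero_div]
  · rw [if_neg hk0]
    have hk1 : 1 ≤ k := by omega
    have hAB1 : ((∑ j ∈ Finset.range r, Polynomial.C (F xp j) * Polynomial.X ^ j) *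
        (∑ j ∈ Finset.range r, Polynomial.C (F xm j) * Polynomial.X ^ (r - 1 - j))).coeff (k + r - 1)
        = ∑ j ∈ Finset.range (r - k), F xp (j + k) * F xm j := by
      rw [coeff_AB, Finset.sum_comm,
        Finset.sum_congr rfl (fun j2 hj2 => Finset.sum_congr rfl (fun j1 _ => if_congr
          (by have := Finset.mem_range.1 hj2; omega :
            (j1 + (r - 1 - j2) = k + r - 1) ↔ j1 = j2 + k) rfl rfl)),
        Finset.sum_congr rfl (fun j2 _ =>
          Finset.sum_ite_eq' (Finset.range r) (j2 + k) (fun j1 => F xp j1 * F xm j2))]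
      exact sum_ite_shift r k (fun j => F xp (j + k) * F xm j)
    have hAB2 : ((∑ j ∈ Finset.range r, Polynomial.C (F xp j) * Polynomial.X ^ j) *
        (∑ j ∈ Finset.range r, Polynomial.C (F xm j) * Polynomial.X ^ (r - 1 - j))).coeff (k - 1)
        = ∑ j ∈ Finset.range (r - (r - k)), F xp j * F xm (j + (r - k)) := by
      rw [coeff_AB,
        Finset.sum_congr rfl (fun j1 _ => Finset.sum_congr rfl (fun j2 hj2 => if_congr
          (by have := Finset.mem_range.1 hj2; omega :
            (j1 + (r - 1 - j2) = k - 1) ↔ j2 = j1 + (r - k)) rfl rfl)),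
        Finset.sum_congr rfl (fun j1 _ =>
          Finset.sum_ite_eq' (Finset.range r) (j1 + (r - k)) (fun j2 => F xp j1 * F xm j2))]
      exact sum_ite_shift r (r - k) (fun j => F xp j * F xm (j + (r - k)))
    have hSC1 : ((∑ j ∈ Finset.range r, Polynomial.X ^ (j + r - 1)) *
        Polynomial.C (∑ j ∈ Finset.range r, F xp j * F xm j) : Polynomial K).coeff (k + r - 1)
        = ∑ i ∈ Finset.range r, F xp i * F xm i := by
      rw [hSC, Finset.sum_congr rfl (fun j hj => if_congr
        (by rw [Finset.mem_range] at hj; omega : (j + r - 1 = k + r - 1) ↔ j = k) rfl rfl),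
        Finset.sum_ite_eq' _ k (fun _ => ∑ i ∈ Finset.range r, F xp i * F xm i),
        if_pos (Finset.mem_range.2 (by omega))]
    have hSC2 : ((∑ j ∈ Finset.range r, Polynomial.X ^ (j + r - 1)) *
        Polynomial.C (∑ j ∈ Finset.range r, F xp j * F xm j) : Polynomial K).coeff (k - 1)
        = 0 := by
      rw [hSC, Finset.sum_congr rfl (fun j hj => if_neg (by omega)), Finset.sum_const_zero]
    show ((_ * _ - _ * _ : Polynomial K)).coeff _ + ((_ * _ - _ * _ : Polynomial K)).coeff _ = _
    rw [Polynomial.coeff_sub, Polynomial.coeff_sub, hAB1, hAB2, hSC1, hSC2, sub_zero]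
    -- now a pure field identity
    obtain ⟨n, hn1, rfl⟩ : ∃ n, 1 ≤ n ∧ r = k + n := ⟨r - k, by omega, by omega⟩
    have hnk : k + n - k = n := by omega
    have hnk2 : k + n - (k + n - k) = k := by omega
    have hnk3 : k + n - n = k := by omega
    rw [hnk, hnk3]
    have e1 : ∑ j ∈ Finset.range n, F xp (j + k) * F xm j
        = (∑ j ∈ Finset.range n, (xp ^ (j + k) - 1) * (xm ^ (j + 0) - 1))
          / ((xp ^ (k + n) - 1) * (xm ^ (k + n) - 1)) := by
      rw [Finset.sum_div]
      refine Finset.sum_congr rfl fun j _ => ?_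
      show (xp ^ (j + k) - 1) / _ * ((xm ^ j - 1) / _) = _
      rw [div_mul_div_comm, Nat.add_zero]
    have e2 : ∑ j ∈ Finset.range k, F xp j * F xm (j + n)
        = (∑ j ∈ Finset.range k, (xp ^ (j + 0) - 1) * (xm ^ (j + n) - 1))
          / ((xp ^ (k + n) - 1) * (xm ^ (k + n) - 1)) := by
      rw [Finset.sum_div]
      refine Finset.sum_congr rfl fun j _ => ?_
      show (xp ^ j - 1) / _ * ((xm ^ (j + n) - 1) / _) = _
      rw [div_mul_div_comm, Nat.add_zero]
    have e3 : ∑ j ∈ Finset.range (k + n), F xp j * F xm j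
        = (∑ j ∈ Finset.range (k + n), (xp ^ (j + 0) - 1) * (xm ^ (j + 0) - 1))
          / ((xp ^ (k + n) - 1) * (xm ^ (k + n) - 1)) := by
      rw [Finset.sum_div]
      refine Finset.sum_congr rfl fun j _ => ?_
      show (xp ^ j - 1) / _ * ((xm ^ j - 1) / _) = _
      rw [div_mul_div_comm, Nat.add_zero]
    rw [e1, e2, e3, aux_sum xp xm hxp1 hxm1 hu1, aux_sum xp xm hxp1 hxm1 hu1,
      aux_sum xp xm hxp1 hxm1 hu1]
    show _ = ((xp ^ k - 1) / (xp ^ (k + n) - 1) + (xm ^ n - 1) / (xm ^ (k + n) - 1) - 1)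
        / (xp * xm - 1)
    have hp1 : xp - 1 ≠ 0 := sub_ne_zero.2 hxp1
    have hm1 : xm - 1 ≠ 0 := sub_ne_zero.2 hxm1
    rw [pow_add xp k n] at hxpr ⊢
    rw [pow_add xm k n] at hxmr ⊢
    simp only [pow_zero, one_mul, pow_add, mul_pow, Nat.cast_add]
    exact final_field_id xp xm k n hxpr hxmr hp1 hm1 hu
end

section
/- For any integer r ≥ 2, evaluating at y = 1: F_r(x_+,1)·F_r(x_−,1) − r·Σ_{k=0}^{r−1} F_{r,k}(x_+)F_{r,k}(x_−) = 1/((x_+−1)(x_−−1)) − r·(x_+^r x_−^r − 1)/((x_+x_−−1)(x_+^r−1)(x_−^r−1)) as rational functions in x_+ and x_−. -/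
set_option maxHeartbeats 1000000 in
theorem IF_key {K : Type*} [Field K] (x y P M R : K)
    (ha : x - 1 ≠ 0) (hb : y - 1 ≠ 0) (hA : P - 1 ≠ 0) (hB : M - 1 ≠ 0)
    (hC : x * y - 1 ≠ 0) :
    ((P - 1) / (x - 1) - R) / (P - 1) * (((M - 1) / (y - 1) - R) / (M - 1)) -
        R * (((P * M - 1) / (x * y - 1) - (P - 1) / (x - 1) - (M - 1) / (y - 1) + R) /
          ((P - 1) * (M - 1)))
      = 1 / ((x - 1) * (y - 1)) - R * (P * M - 1) / ((x * y - 1) * (P - 1) * (M - 1)) := by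
  have hAB : (P - 1) * (M - 1) ≠ 0 := mul_ne_zero hA hB
  have h1 : ((P - 1) / (x - 1) - R) * ((M - 1) / (y - 1) - R) -
        R * ((P * M - 1) / (x * y - 1) - (P - 1) / (x - 1) - (M - 1) / (y - 1) + R)
      = (P - 1) * (M - 1) / ((x - 1) * (y - 1)) - R * (P * M - 1) / (x * y - 1) := by
    field_simp
    ring
  rw [div_mul_div_comm, ← mul_div_assoc, ← sub_div, h1, sub_div, div_div,
    mul_comm ((x - 1) * (y - 1)) ((P - 1) * (M - 1)), ← div_div, div_self hAB,
    div_div, ← mul_assoc]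

set_option maxHeartbeats 1000000 in
/-- For `r ≥ 2`, evaluating at `y = 1`:
`F_r(x₊,1)·F_r(x₋,1) - r·∑_{k<r} F_{r,k}(x₊)F_{r,k}(x₋)
 = 1/((x₊-1)(x₋-1)) - r·(x₊^r x₋^r - 1)/((x₊x₋-1)(x₊^r-1)(x₋^r-1))`
as rational functions in the independent variables `x₊`, `x₋` (realized in the
iterated rational function field). -/
theorem IF_at_one (r : ℕ) (hr : 2 ≤ r) :
    let xp : RatFunc (RatFunc ℚ) := RatFunc.C RatFunc.X
    let xm : RatFunc (RatFunc ℚ) := RatFunc.X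
    (∑ k ∈ Finset.range r, (xp ^ k - 1) / (xp ^ r - 1)) *
          (∑ k ∈ Finset.range r, (xm ^ k - 1) / (xm ^ r - 1)) -
        (r : RatFunc (RatFunc ℚ)) *
          ∑ k ∈ Finset.range r,
            ((xp ^ k - 1) / (xp ^ r - 1)) * ((xm ^ k - 1) / (xm ^ r - 1))
      = 1 / ((xp - 1) * (xm - 1)) -
          (r : RatFunc (RatFunc ℚ)) * (xp ^ r * xm ^ r - 1) /
            ((xp * xm - 1) * (xp ^ r - 1) * (xm ^ r - 1)) := by
  intro xp xm
  have hr0 : 0 < r := lt_of_lt_of_le two_pos hr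
  -- nonzero / ≠ 1 facts
  have hXne1 : (RatFunc.X : RatFunc ℚ) ≠ 1 := by
    have h : (Polynomial.X - Polynomial.C 1 : Polynomial ℚ) ≠ 0 := Polynomial.X_sub_C_ne_zero 1
    have h2 := RatFunc.algebraMap_ne_zero h
    simp only [map_sub, RatFunc.algebraMap_X, map_one] at h2
    exact sub_ne_zero.mp h2
  have hXrne1 : (RatFunc.X : RatFunc ℚ) ^ r ≠ 1 := by
    have h : (Polynomial.X ^ r - Polynomial.C 1 : Polynomial ℚ) ≠ 0 :=
      Polynomial.X_pow_sub_C_ne_zero hr0 1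
    have h2 := RatFunc.algebraMap_ne_zero h
    simp only [map_sub, map_pow, RatFunc.algebraMap_X, map_one] at h2
    exact sub_ne_zero.mp h2
  have hxp1 : xp ≠ 1 := by
    simp only [xp]
    rw [show (1 : RatFunc (RatFunc ℚ)) = RatFunc.C 1 from (map_one _).symm]
    exact fun h => hXne1 (RatFunc.C.injective h)
  have hxm1 : xm ≠ 1 := by
    have h : (Polynomial.X - Polynomial.C 1 : Polynomial (RatFunc ℚ)) ≠ 0 :=
      Polynomial.X_sub_C_ne_zero 1
    have h2 := RatFunc.algebraMap_ne_zero h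
    simp only [map_sub, RatFunc.algebraMap_X, map_one] at h2
    exact sub_ne_zero.mp h2
  have hxpr1 : xp ^ r ≠ 1 := by
    simp only [xp, ← map_pow]
    rw [show (1 : RatFunc (RatFunc ℚ)) = RatFunc.C 1 from (map_one _).symm]
    exact fun h => hXrne1 (RatFunc.C.injective h)
  have hxmr1 : xm ^ r ≠ 1 := by
    have h : (Polynomial.X ^ r - Polynomial.C 1 : Polynomial (RatFunc ℚ)) ≠ 0 :=
      Polynomial.X_pow_sub_C_ne_zero hr0 1
    have h2 := RatFunc.algebraMap_ne_zero h
    simp only [map_sub, map_pow, RatFunc.algebraMap_X, map_one] at h2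
    exact sub_ne_zero.mp h2
  have hxpxm1 : xp * xm ≠ 1 := by
    have hCp : (Polynomial.C (RatFunc.X : RatFunc ℚ) * Polynomial.X - Polynomial.C 1 :
        Polynomial (RatFunc ℚ)) ≠ 0 := by
      intro h
      have h3 := congrArg (fun p => Polynomial.coeff p 1) h
      simp [Polynomial.coeff_one, RatFunc.X_ne_zero] at h3
    have h2 := RatFunc.algebraMap_ne_zero hCp
    simp only [map_sub, map_mul, RatFunc.algebraMap_X, RatFunc.algebraMap_C, map_one] at h2
    exact sub_ne_zero.mp h2
  have ha : xp - 1 ≠ 0 := sub_ne_zero.mpr hxp1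
  have hb : xm - 1 ≠ 0 := sub_ne_zero.mpr hxm1
  have hA : xp ^ r - 1 ≠ 0 := sub_ne_zero.mpr hxpr1
  have hB : xm ^ r - 1 ≠ 0 := sub_ne_zero.mpr hxmr1
  have hC : xp * xm - 1 ≠ 0 := sub_ne_zero.mpr hxpxm1
  -- closed forms of geometric sums
  have S1 : ∑ k ∈ Finset.range r, xp ^ k = (xp ^ r - 1) / (xp - 1) := geom_sum_eq hxp1 r
  have S2 : ∑ k ∈ Finset.range r, xm ^ k = (xm ^ r - 1) / (xm - 1) := geom_sum_eq hxm1 r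
  have S3 : ∑ k ∈ Finset.range r, (xp * xm) ^ k = ((xp * xm) ^ r - 1) / (xp * xm - 1) :=
    geom_sum_eq hxpxm1 r
  have T1 : ∑ k ∈ Finset.range r, (xp ^ k - 1) / (xp ^ r - 1)
      = ((xp ^ r - 1) / (xp - 1) - r) / (xp ^ r - 1) := by
    rw [← Finset.sum_div, Finset.sum_sub_distrib, S1, Finset.sum_const, Finset.card_range,
      nsmul_eq_mul, mul_one]
  have T2 : ∑ k ∈ Finset.range r, (xm ^ k - 1) / (xm ^ r - 1)
      = ((xm ^ r - 1) / (xm - 1) - r) / (xm ^ r - 1) := by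
    rw [← Finset.sum_div, Finset.sum_sub_distrib, S2, Finset.sum_const, Finset.card_range,
      nsmul_eq_mul, mul_one]
  have T3 : ∑ k ∈ Finset.range r, ((xp ^ k - 1) / (xp ^ r - 1)) * ((xm ^ k - 1) / (xm ^ r - 1))
      = (((xp * xm) ^ r - 1) / (xp * xm - 1) - (xp ^ r - 1) / (xp - 1)
          - (xm ^ r - 1) / (xm - 1) + r) / ((xp ^ r - 1) * (xm ^ r - 1)) := by
    have key : ∀ k ∈ Finset.range r, ((xp ^ k - 1) / (xp ^ r - 1)) * ((xm ^ k - 1) / (xm ^ r - 1))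
        = ((xp * xm) ^ k - xp ^ k - xm ^ k + 1) / ((xp ^ r - 1) * (xm ^ r - 1)) := by
      intro k _
      rw [div_mul_div_comm, mul_pow]
      ring_nf
    rw [Finset.sum_congr rfl key, ← Finset.sum_div]
    congr 1
    rw [Finset.sum_add_distrib, Finset.sum_sub_distrib, Finset.sum_sub_distrib, S1, S2, S3,
      Finset.sum_const, Finset.card_range, nsmul_eq_mul, mul_one]
  rw [T1, T2, T3]
  rw [mul_pow]
  exact IF_key xp xm (xp ^ r) (xm ^ r) (r : RatFunc (RatFunc ℚ)) ha hb hA hB hC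
end
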